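/- Let K = ℚ(√-3), with O_{K,2} the completion of O_K at the inert prime 2. Then the quotient group O_{K,2}^× / (ℤ₂^× · (1 + 4·O_{K,2})) is cyclic of order 6, generated by the images of ω₂ (of order 3) and 1+2ω₂ (of order 2). -/

import Mathlib

open Polynomial

/-- `O_{K,2} = ℤ₂[ω]`, the completion of the ring of integers of `K = ℚ(√-3)` at the
inert prime `2`, realized as `ℤ₂[X]/(X²+X+1)` (the unramified quadratic extension of
`ℤ₂`, with residue field `𝔽₄`). -/
abbrev OK2 : Type := AdjoinRoot (X ^ 2 + X + 1 : Polynomial ℤ_[2])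

/-- The image `ω₂` of `ω` in `O_{K,2}`. -/
noncomputable abbrev ω2 : OK2 := AdjoinRoot.root _

/-- The subgroup `ℤ₂^× · (1 + 4 O_{K,2})` of `O_{K,2}^×`. -/
noncomputable def H2 : Subgroup OK2ˣ :=
  Subgroup.closure {u : OK2ˣ |
    (∃ z : ℤ_[2], (u : OK2) = AdjoinRoot.of _ z) ∨ (∃ y : OK2, (u : OK2) = 1 + 4 * y)}

def Rq : Type := ZMod 4 × ZMod 4

namespace Rq
instance : DecidableEq Rq := inferInstanceAs (DecidableEq (ZMod 4 × ZMod 4))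
instance : Fintype Rq := inferInstanceAs (Fintype (ZMod 4 × ZMod 4))

def mk' (a b : ZMod 4) : Rq := (a, b)
def ca (x : Rq) : ZMod 4 := x.1
def cb (x : Rq) : ZMod 4 := x.2

instance : Zero Rq := ⟨mk' 0 0⟩
instance : One Rq := ⟨mk' 1 0⟩
instance : Add Rq := ⟨fun x y => mk' (x.ca+y.ca) (x.cb+y.cb)⟩
instance : Neg Rq := ⟨fun x => mk' (-x.ca) (-x.cb)⟩
instance : Mul Rq := ⟨fun x y => mk' (x.ca*y.ca - x.cb*y.cb) (x.ca*y.cb + x.cb*y.ca - x.cb*y.cb)⟩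

theorem ext {x y : Rq} (h1 : x.ca = y.ca) (h2 : x.cb = y.cb) : x = y := Prod.ext h1 h2
@[simp] theorem ca_mk (a b : ZMod 4) : (mk' a b).ca = a := rfl
@[simp] theorem cb_mk (a b : ZMod 4) : (mk' a b).cb = b := rfl
@[simp] theorem mul_def (x y : Rq) : x * y = mk' (x.ca*y.ca - x.cb*y.cb) (x.ca*y.cb + x.cb*y.ca - x.cb*y.cb) := rfl
@[simp] theorem add_def (x y : Rq) : x + y = mk' (x.ca+y.ca) (x.cb+y.cb) := rfl
@[simp] theorem neg_def (x : Rq) : -x = mk' (-x.ca) (-x.cb) := rfl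
@[simp] theorem zero_def : (0 : Rq) = mk' 0 0 := rfl
@[simp] theorem one_def : (1 : Rq) = mk' 1 0 := rfl

instance : CommRing Rq where
  add_assoc x y z := by apply ext <;> simp <;> ring
  zero_add x := by apply ext <;> simp
  add_zero x := by apply ext <;> simp
  add_comm x y := by apply ext <;> simp <;> ring
  mul_assoc x y z := by apply ext <;> simp <;> ring
  one_mul x := by apply ext <;> simp
  mul_one x := by apply ext <;> simp
  left_distrib x y z := by apply ext <;> simp <;> ring
  right_distrib x y z := by apply ext <;> simp <;> ring
  mul_comm x y := by apply ext <;> simp <;> ring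
  neg_add_cancel x := by apply ext <;> simp
  zero_mul x := by apply ext <;> simp
  mul_zero x := by apply ext <;> simp
  nsmul := nsmulRec
  zsmul := zsmulRec

def π : ZMod 4 →+* Rq where
  toFun c := mk' c 0
  map_one' := rfl
  map_zero' := rfl
  map_mul' x y := by apply ext <;> simp
  map_add' x y := by apply ext <;> simp

end Rq




noncomputable def φ0 : ℤ_[2] →+* ZMod 4 := PadicInt.toZModPow 2

theorem φ0_eq_zero_iff (z : ℤ_[2]) : φ0 z = 0 ↔ ∃ y, z = 4 * y := by
  have h := PadicInt.ker_toZModPow (p := 2) 2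
  constructor
  · intro hz
    have : z ∈ RingHom.ker (PadicInt.toZModPow (p := 2) 2) := hz
    rw [h, Ideal.mem_span_singleton] at this
    obtain ⟨y, hy⟩ := this
    exact ⟨y, by rw [hy]; norm_num⟩
  · rintro ⟨y, rfl⟩
    have h4 : φ0 4 = 0 := by rw [map_ofNat]; decide
    rw [map_mul, h4, zero_mul]

-- units of ℤ_[2]
theorem isUnit_padic (z : ℤ_[2]) (h : ∀ c : ZMod 4, φ0 z ≠ 2 * c) : IsUnit z := by
  rw [PadicInt.isUnit_iff]
  by_contra hn
  have hlt : ‖z‖ < 1 := lt_of_le_of_ne (PadicInt.norm_le_one z) hn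
  rw [PadicInt.norm_lt_one_iff_dvd] at hlt
  obtain ⟨m, rfl⟩ := hlt
  refine h (φ0 m) ?_
  have h2 : φ0 (2 : ℤ_[2]) = 2 := by rw [map_ofNat]
  rw [show ((2:ℕ):ℤ_[2]) = (2:ℤ_[2]) by norm_num, map_mul, h2]

noncomputable def ι : ℤ_[2] →+* Rq := Rq.π.comp φ0

theorem hroot : (X ^ 2 + X + 1 : Polynomial ℤ_[2]).eval₂ ι (Rq.mk' 0 1) = 0 := by
  simp [eval₂_add, eval₂_pow, eval₂_X, eval₂_one]
  decide

noncomputable def fK : OK2 →+* Rq := AdjoinRoot.lift ι (Rq.mk' 0 1) hroot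

theorem fK_of (z : ℤ_[2]) : fK (AdjoinRoot.of _ z) = Rq.mk' (φ0 z) 0 := AdjoinRoot.lift_of hroot
theorem fK_root : fK ω2 = Rq.mk' 0 1 := AdjoinRoot.lift_root hroot

theorem poly_monic : (X ^ 2 + X + 1 : Polynomial ℤ_[2]).Monic := by monicity!

theorem poly_deg : (X ^ 2 + X + 1 : Polynomial ℤ_[2]).degree = 2 := by compute_degree!

theorem repr_ok2 (x : OK2) :
    ∃ a b : ℤ_[2], x = AdjoinRoot.of _ a + AdjoinRoot.of _ b * ω2 := by
  obtain ⟨p, rfl⟩ := AdjoinRoot.mk_surjective x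
  set q := p %ₘ (X ^ 2 + X + 1 : Polynomial ℤ_[2]) with hq
  refine ⟨q.coeff 0, q.coeff 1, ?_⟩
  have h1 : AdjoinRoot.mk _ p = AdjoinRoot.mk (X ^ 2 + X + 1 : Polynomial ℤ_[2]) q := by
    rw [hq, Polynomial.modByMonic_eq_sub_mul_div p _, map_sub, map_mul,
      AdjoinRoot.mk_self, zero_mul, sub_zero]
  have hdeg : q.degree ≤ 1 := by
    have h2 := Polynomial.degree_modByMonic_lt p poly_monic
    rw [poly_deg] at h2
    exact Order.le_of_lt_succ (by exact_mod_cast h2)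
  have h2 := Polynomial.eq_X_add_C_of_degree_le_one hdeg
  rw [h1]
  conv_lhs => rw [h2]
  rw [map_add, map_mul, AdjoinRoot.mk_X, AdjoinRoot.mk_C, AdjoinRoot.mk_C]
  ring

theorem key : ω2 ^ 2 + ω2 + 1 = 0 := by
  have h := AdjoinRoot.eval₂_root (X ^ 2 + X + 1 : Polynomial ℤ_[2])
  simpa using h

noncomputable def σK : OK2 →+* OK2 :=
  AdjoinRoot.lift (AdjoinRoot.of _) (-1 - ω2) (by
    simp only [eval₂_add, eval₂_pow, eval₂_X, eval₂_one]
    linear_combination key)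

theorem σK_of (z : ℤ_[2]) : σK (AdjoinRoot.of _ z) = AdjoinRoot.of _ z := AdjoinRoot.lift_of _
theorem σK_root : σK ω2 = -1 - ω2 := AdjoinRoot.lift_root _

theorem norm_eq (a b : ℤ_[2]) :
    (AdjoinRoot.of _ a + AdjoinRoot.of _ b * ω2) *
      σK (AdjoinRoot.of _ a + AdjoinRoot.of _ b * ω2)
      = AdjoinRoot.of _ (a ^ 2 - a * b + b ^ 2) := by
  rw [map_add, map_mul, σK_of, σK_of, σK_root]
  rw [show (AdjoinRoot.of (X ^ 2 + X + 1 : Polynomial ℤ_[2])) (a ^ 2 - a * b + b ^ 2)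
    = (AdjoinRoot.of _ a) ^ 2 - AdjoinRoot.of _ a * AdjoinRoot.of _ b + (AdjoinRoot.of _ b) ^ 2 by
      rw [map_add, map_sub, map_mul, map_pow, map_pow]]
  linear_combination (-(AdjoinRoot.of (X ^ 2 + X + 1 : Polynomial ℤ_[2]) b) ^ 2) * key

theorem isUnit_ok2 (a b : ℤ_[2]) (h : IsUnit (a ^ 2 - a * b + b ^ 2)) :
    IsUnit (AdjoinRoot.of _ a + AdjoinRoot.of _ b * ω2) := by
  obtain ⟨u, hu⟩ := h
  refine IsUnit.of_mul_eq_one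
    (σK (AdjoinRoot.of _ a + AdjoinRoot.of _ b * ω2) * AdjoinRoot.of (X ^ 2 + X + 1 : Polynomial ℤ_[2]) ((↑u⁻¹ : ℤ_[2]))) ?_
  rw [← mul_assoc, norm_eq, ← map_mul, ← hu, Units.mul_inv, map_one]

theorem fK_val (a b : ℤ_[2]) :
    fK (AdjoinRoot.of _ a + AdjoinRoot.of _ b * ω2) = Rq.mk' (φ0 a) (φ0 b) := by
  rw [map_add, map_mul, fK_of, fK_of, fK_root]
  apply Rq.ext <;> simp

theorem fK_ker {x : OK2} (h : fK x = 0) : ∃ y : OK2, x = 4 * y := by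
  obtain ⟨a, b, rfl⟩ := repr_ok2 x
  rw [fK_val] at h
  have ha : φ0 a = 0 := by have := congrArg Rq.ca h; simpa using this
  have hb : φ0 b = 0 := by have := congrArg Rq.cb h; simpa using this
  obtain ⟨a', rfl⟩ := (φ0_eq_zero_iff a).1 ha
  obtain ⟨b', rfl⟩ := (φ0_eq_zero_iff b).1 hb
  refine ⟨AdjoinRoot.of _ a' + AdjoinRoot.of _ b' * ω2, ?_⟩
  rw [map_mul, map_mul]
  rw [show (AdjoinRoot.of (X ^ 2 + X + 1 : Polynomial ℤ_[2])) 4 = 4 by rw [map_ofNat]]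
  ring


theorem rq_aux1 : ∀ x y : Rq, x * y = 1 → x.cb = 0 → y.cb = 0 := by decide

def N0 : Subgroup Rqˣ where
  carrier := {u : Rqˣ | (u : Rq).cb = 0}
  one_mem' := rfl
  mul_mem' := by
    intro u v hu hv
    show ((u : Rq) * v).cb = 0
    rw [Rq.mul_def, Rq.cb_mk]
    rw [show (u : Rq).cb = 0 from hu, show (v : Rq).cb = 0 from hv]
    ring
  inv_mem' := by
    intro u hu
    exact rq_aux1 (u : Rq) ((u⁻¹ : Rqˣ) : Rq) (by rw [← Units.val_mul, mul_inv_cancel, Units.val_one]) hu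

instance : DecidablePred (· ∈ N0) := fun u => inferInstanceAs (Decidable ((u : Rq).cb = 0))

abbrev Q6 : Type := Rqˣ ⧸ N0

noncomputable def mζ : OK2ˣ →* Rqˣ := Units.map fK.toMonoidHom

noncomputable def ψ : OK2ˣ →* Q6 := (QuotientGroup.mk' N0).comp mζ

theorem mem_ker_ψ (u : OK2ˣ) : u ∈ ψ.ker ↔ (fK ↑u).cb = 0 := by
  constructor
  · intro h
    have : mζ u ∈ N0 := by
      rw [← QuotientGroup.ker_mk' N0]
      exact h
    exact this
  · intro h
    have : mζ u ∈ N0 := h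
    show QuotientGroup.mk' N0 (mζ u) = 1
    rwa [← MonoidHom.mem_ker, QuotientGroup.ker_mk' N0]

theorem val_natCast_zmod4 : ∀ a : ZMod 4, ((a.val : ℕ) : ZMod 4) = a := by decide

theorem rq_aux2 : ∀ x y : Rq, x * y = 1 → ∀ c : ZMod 4,
    x.ca ^ 2 - x.ca * x.cb + x.cb ^ 2 ≠ 2 * c := by decide

theorem rq_aux3 : ∀ x y : Rq, x * y = 1 → x.cb = 0 → ∀ c : ZMod 4, x.ca ≠ 2 * c := by decide

theorem mζ_surj : Function.Surjective mζ := by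
  intro w
  set a := (w : Rq).ca with ha'
  set b := (w : Rq).cb with hb'
  set A : ℤ_[2] := ((a.val : ℕ) : ℤ_[2]) with hA'
  set B : ℤ_[2] := ((b.val : ℕ) : ℤ_[2]) with hB'
  have hA : φ0 A = a := by rw [hA', map_natCast, val_natCast_zmod4]
  have hB : φ0 B = b := by rw [hB', map_natCast, val_natCast_zmod4]
  have hN : IsUnit (A ^ 2 - A * B + B ^ 2) := by
    apply isUnit_padic
    intro c hc
    rw [map_add, map_sub, map_pow, map_pow, map_mul, hA, hB] at hc
    exact rq_aux2 (w : Rq) ((w⁻¹ : Rqˣ) : Rq)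
      (by rw [← Units.val_mul, mul_inv_cancel, Units.val_one]) c hc
  obtain ⟨v, hv⟩ := isUnit_ok2 A B hN
  refine ⟨v, Units.ext ?_⟩
  show fK ↑v = (w : Rq)
  rw [hv, fK_val, hA, hB]
  exact rfl

theorem ψ_surj : Function.Surjective ψ :=
  (QuotientGroup.mk'_surjective N0).comp mζ_surj

theorem rq4 : (4 : Rq) = 0 := by decide

theorem fK_one_add_four (y : OK2) : fK (1 + 4 * y) = 1 := by
  rw [map_add, map_mul, map_one, show fK 4 = 4 by rw [map_ofNat], rq4, zero_mul, add_zero]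

theorem hker : ψ.ker = H2 := by
  apply le_antisymm
  · intro u hu
    rw [mem_ker_ψ] at hu
    set α := (fK ↑u).ca with hα'
    have hα : ∀ c : ZMod 4, α ≠ 2 * c := by
      apply rq_aux3 (fK ↑u) (fK ↑(u⁻¹))
      · rw [← map_mul, ← Units.val_mul, mul_inv_cancel, Units.val_one, map_one]
      · exact hu
    set A : ℤ_[2] := ((α.val : ℕ) : ℤ_[2]) with hA'
    have hA : φ0 A = α := by rw [hA', map_natCast, val_natCast_zmod4]
    have hAu : IsUnit (AdjoinRoot.of (X ^ 2 + X + 1 : Polynomial ℤ_[2]) A) := by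
      apply IsUnit.map
      apply isUnit_padic
      intro c hc
      exact hα c (by rw [← hA]; exact hc)
    obtain ⟨w0, hw0⟩ := hAu
    have hw0mem : w0 ∈ H2 := Subgroup.subset_closure (Or.inl ⟨A, hw0.symm ▸ rfl⟩)
    have heq : mζ u = mζ w0 := by
      apply Units.ext
      show fK ↑u = fK ↑w0
      rw [hw0, fK_of]
      apply Rq.ext
      · rw [hA]; exact rfl
      · rw [hu]; exact rfl
    have hmem2 : u * w0⁻¹ ∈ H2 := by
      have h1 : fK ↑(u * w0⁻¹) = 1 := by
        have : mζ (u * w0⁻¹) = 1 := by rw [map_mul, map_inv, heq, mul_inv_cancel]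
        have h2 := congrArg Units.val this
        exact h2
      have h3 : fK (↑(u * w0⁻¹) - 1) = 0 := by rw [map_sub, map_one, h1, sub_self]
      obtain ⟨y, hy⟩ := fK_ker h3
      exact Subgroup.subset_closure (Or.inr ⟨y, by rw [← hy]; ring⟩)
    have := mul_mem hmem2 hw0mem
    rwa [inv_mul_cancel_right] at this
  · have : Subgroup.closure {u : OK2ˣ |
        (∃ z : ℤ_[2], (u : OK2) = AdjoinRoot.of _ z) ∨ (∃ y : OK2, (u : OK2) = 1 + 4 * y)}
        ≤ ψ.ker := by
      rw [Subgroup.closure_le]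
      rintro u (⟨z, hz⟩ | ⟨y, hy⟩)
      · rw [SetLike.mem_coe, mem_ker_ψ, hz, fK_of]; exact rfl
      · rw [SetLike.mem_coe, mem_ker_ψ, hy, fK_one_add_four]; exact rfl
    exact this

def ru : Rqˣ := ⟨Rq.mk' 0 1, Rq.mk' 3 3, by decide, by decide⟩
def su : Rqˣ := ⟨Rq.mk' 1 2, Rq.mk' 1 2, by decide, by decide⟩

noncomputable def e6 : (OK2ˣ ⧸ H2) ≃* Q6 :=
  (QuotientGroup.quotientMulEquivOfEq hker.symm).trans
    (QuotientGroup.quotientKerEquivOfSurjective ψ ψ_surj)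

theorem e6_mk (u : OK2ˣ) : e6 (QuotientGroup.mk u) = ψ u := by
  rw [e6, MulEquiv.trans_apply, QuotientGroup.quotientMulEquivOfEq_mk]
  exact QuotientGroup.kerLift_mk ψ u

theorem q6_exp : ∀ x : Rqˣ, ∃ k : Fin 6, ((ru * su) ^ (k : ℕ))⁻¹ * x ∈ N0 := by decide

theorem q6_cyclic : IsCyclic Q6 := by
  refine ⟨⟨QuotientGroup.mk (ru * su), fun q => ?_⟩⟩
  obtain ⟨x, rfl⟩ := QuotientGroup.mk'_surjective N0 q
  obtain ⟨k, hk⟩ := q6_exp x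
  refine Subgroup.mem_zpowers_iff.mpr ⟨(k : ℕ), ?_⟩
  rw [zpow_natCast, ← QuotientGroup.mk_pow]
  exact QuotientGroup.eq.mpr hk

theorem q6_card : Nat.card Q6 = 6 := by
  have h := Subgroup.card_eq_card_quotient_mul_card_subgroup N0
  have h1 : Nat.card Rqˣ = 12 := by
    rw [Nat.card_eq_fintype_card]; decide
  have h2 : Nat.card N0 = 2 := by
    rw [Nat.card_eq_fintype_card]; decide
  have h' : 12 = Nat.card Q6 * 2 := by rw [← h1, ← h2]; exact h
  omega

theorem q6_order_ru : orderOf (QuotientGroup.mk ru : Q6) = 3 := by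
  rw [orderOf_eq_iff (by norm_num)]
  constructor
  · rw [← QuotientGroup.mk_pow, QuotientGroup.eq_one_iff]
    decide
  · intro m hm hm'
    rw [← QuotientGroup.mk_pow, Ne, QuotientGroup.eq_one_iff]
    interval_cases m <;> decide

theorem q6_order_su : orderOf (QuotientGroup.mk su : Q6) = 2 := by
  rw [orderOf_eq_iff (by norm_num)]
  constructor
  · rw [← QuotientGroup.mk_pow, QuotientGroup.eq_one_iff]
    decide
  · intro m hm hm'
    rw [← QuotientGroup.mk_pow, Ne, QuotientGroup.eq_one_iff]
    interval_cases m <;> decide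

theorem q6_gen : ∀ x : Rqˣ, ∃ i : Fin 3, ∃ j : Fin 2,
    (ru ^ (i : ℕ) * su ^ (j : ℕ))⁻¹ * x ∈ N0 := by decide

theorem isUnit3 : IsUnit (3 : ℤ_[2]) := by
  apply isUnit_padic
  have h : ∀ c : ZMod 4, (3 : ZMod 4) ≠ 2 * c := by decide
  intro c hc
  rw [map_ofNat] at hc
  exact h c hc


/-- `O_{K,2}^× / (ℤ₂^× · (1 + 4 O_{K,2}))` is cyclic of order `6`, generated by the
images of `ω₂` (of order 3) and `1 + 2ω₂` (of order 2). -/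
theorem stmt6 :
    IsCyclic (OK2ˣ ⧸ H2) ∧ Nat.card (OK2ˣ ⧸ H2) = 6 ∧
    ∃ u v : OK2ˣ, (u : OK2) = ω2 ∧ (v : OK2) = 1 + 2 * ω2 ∧
      orderOf (QuotientGroup.mk u : OK2ˣ ⧸ H2) = 3 ∧
      orderOf (QuotientGroup.mk v : OK2ˣ ⧸ H2) = 2 ∧
      Subgroup.closure {(QuotientGroup.mk u : OK2ˣ ⧸ H2), QuotientGroup.mk v} = ⊤ := by

  have hu_isunit : IsUnit (ω2 : OK2) := by
    have h := isUnit_ok2 0 1 (by norm_num)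
    rwa [map_zero, map_one, zero_add, one_mul] at h
  have hv_isunit : IsUnit (1 + 2 * ω2 : OK2) := by
    have h := isUnit_ok2 1 2 (by
      rw [show ((1:ℤ_[2])^2 - 1*2 + 2^2) = 3 by norm_num]
      exact isUnit3)
    rwa [map_one, show (AdjoinRoot.of (X ^ 2 + X + 1 : Polynomial ℤ_[2])) 2 = 2 by rw [map_ofNat]] at h
  obtain ⟨u, hu⟩ := hu_isunit
  obtain ⟨v, hv⟩ := hv_isunit
  have hmu : mζ u = ru := by
    apply Units.ext
    show fK ↑u = Rq.mk' 0 1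
    rw [hu, fK_root]
  have hmv : mζ v = su := by
    apply Units.ext
    show fK ↑v = Rq.mk' 1 2
    rw [hv]
    have he : (1 + 2 * ω2 : OK2) = AdjoinRoot.of _ 1 + AdjoinRoot.of _ 2 * ω2 := by
      rw [map_one, show (AdjoinRoot.of (X ^ 2 + X + 1 : Polynomial ℤ_[2])) 2 = 2 by rw [map_ofNat]]
    rw [he, fK_val]
    apply Rq.ext
    · rw [Rq.ca_mk, map_one]; rfl
    · rw [Rq.cb_mk, map_ofNat]; rfl
  have he_u : e6 (QuotientGroup.mk u) = QuotientGroup.mk ru := by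
    rw [e6_mk]; show QuotientGroup.mk (mζ u) = _; rw [hmu]
  have he_v : e6 (QuotientGroup.mk v) = QuotientGroup.mk su := by
    rw [e6_mk]; show QuotientGroup.mk (mζ v) = _; rw [hmv]
  refine ⟨?_, ?_, u, v, hu, hv, ?_, ?_, ?_⟩
  · have := q6_cyclic
    exact isCyclic_of_surjective e6.symm.toMonoidHom e6.symm.surjective
  · rw [Nat.card_congr e6.toEquiv, q6_card]
  · rw [← orderOf_injective e6.toMonoidHom e6.injective]
    simp only [MulEquiv.coe_toMonoidHom]
    rw [he_u, q6_order_ru]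
  · rw [← orderOf_injective e6.toMonoidHom e6.injective]
    simp only [MulEquiv.coe_toMonoidHom]
    rw [he_v, q6_order_su]
  · rw [eq_top_iff]
    intro z _
    obtain ⟨q, rfl⟩ : ∃ q : Q6, e6.symm q = z := ⟨e6 z, e6.symm_apply_apply z⟩
    obtain ⟨x, rfl⟩ := QuotientGroup.mk'_surjective N0 q
    obtain ⟨i, j, hij⟩ := q6_gen x
    have hx : (QuotientGroup.mk x : Q6)
        = (QuotientGroup.mk ru) ^ (i : ℕ) * (QuotientGroup.mk su) ^ (j : ℕ) := by
      rw [← QuotientGroup.mk_pow, ← QuotientGroup.mk_pow, ← QuotientGroup.mk_mul]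
      exact (QuotientGroup.eq.mpr hij).symm
    have hsymm : e6.symm (QuotientGroup.mk' N0 x)
        = (QuotientGroup.mk u : OK2ˣ ⧸ H2) ^ (i : ℕ) * (QuotientGroup.mk v) ^ (j : ℕ) := by
      have : QuotientGroup.mk' N0 x = (QuotientGroup.mk x : Q6) := rfl
      rw [this, hx, ← he_u, ← he_v, ← map_pow, ← map_pow, ← map_mul, MulEquiv.symm_apply_apply]
    rw [hsymm]
    have h1 : (QuotientGroup.mk u : OK2ˣ ⧸ H2) ∈ Subgroup.closure
        {(QuotientGroup.mk u : OK2ˣ ⧸ H2), QuotientGroup.mk v} :=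
      Subgroup.subset_closure (Set.mem_insert _ _)
    have h2 : (QuotientGroup.mk v : OK2ˣ ⧸ H2) ∈ Subgroup.closure
        {(QuotientGroup.mk u : OK2ˣ ⧸ H2), QuotientGroup.mk v} :=
      Subgroup.subset_closure (Set.mem_insert_of_mem _ rfl)
    exact mul_mem (pow_mem h1 _) (pow_mem h2 _)
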